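/- Uniform relative bound on the trajectories: Fix an integer N ≥ 1, intensities a_1,…,a_N ∈ ℝ∖{0} such that Σ_{i∈A} a_i ≠ 0 for every nonempty proper subset A ⊊ {1,…,N} (the total sum Σ_{i=1}^N a_i may vanish), a final time T > 0, and a constant M ≥ 0. Then there exists a constant C > 0, depending only on N, the intensities a_i, T and M, such that for every kernel profile G : (0,∞) → ℝ that is differentiable with locally Lipschitz derivative on (0,∞), whose derivative is Lipschitz on [1,∞), with sup_{r≥1} |G'(r)| ≤ M, and for every solution (x_1,…,x_N) of the point-vortex system with kernel G on [0,T) with no collapse, one has sup_{t∈[0,T)} diam(x_1(t),…,x_N(t)) ≤ diam(x_1(0),…,x_N(0)) + C, where diam(y_1,…,y_N) = max_{i≠j} |y_i − y_j|. -/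

import Mathlib

open Filter MeasureTheory

noncomputable section

/-- The plane `ℝ²`. -/
abbrev Plane : Type := EuclideanSpace ℝ (Fin 2)

/-- Counterclockwise rotation by `π/2`: `(v₁, v₂)^⊥ = (−v₂, v₁)`. -/
def perp (v : Plane) : Plane := WithLp.toLp 2 ![-v 1, v 0]

/-- `∇^⊥_y K(|y|) = K'(|y|) y^⊥ / |y|` for a radial kernel profile `K`. -/
def gradPerp (K : ℝ → ℝ) (y : Plane) : Plane := (deriv K ‖y‖ / ‖y‖) • perp y

/-- A solution of the point-vortex system with intensities `a`, kernel profile `G`,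
on the time interval `[0, T)`, with no collapse. -/
def IsVortexSolution (N : ℕ) (a : Fin N → ℝ) (G : ℝ → ℝ) (T : ℝ)
    (x : Fin N → ℝ → Plane) : Prop :=
  (∀ t ∈ Set.Ico (0 : ℝ) T, ∀ i j : Fin N, i ≠ j → x i t ≠ x j t) ∧
  ∀ i : Fin N, ∀ t ∈ Set.Ico (0 : ℝ) T,
    HasDerivWithinAt (x i)
      (∑ j ∈ Finset.univ.erase i, a j • gradPerp G (x i t - x j t))
      (Set.Ico 0 T) t

/-- The kernel regularity used in the paper: `G ∈ C^{1,1}_loc((0,∞)) ∩ C^{1,1}([1,∞))`,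
i.e. `G` is differentiable on `(0,∞)`, with locally Lipschitz derivative there,
and with Lipschitz derivative on `[1,∞)`. -/
def KernelRegular (G : ℝ → ℝ) : Prop :=
  DifferentiableOn ℝ G (Set.Ioi 0) ∧
  (∀ s : Set ℝ, IsCompact s → s ⊆ Set.Ioi 0 → ∃ L : NNReal, LipschitzOnWith L (deriv G) s) ∧
  (∃ L : NNReal, LipschitzOnWith L (deriv G) (Set.Ici 1))


/-! ### Auxiliary lemmas -/

lemma norm_perp (v : Plane) : ‖perp v‖ = ‖v‖ := by
  rw [EuclideanSpace.norm_eq, EuclideanSpace.norm_eq]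
  congr 1
  rw [Fin.sum_univ_two, Fin.sum_univ_two]
  have h0 : perp v 0 = -v 1 := rfl
  have h1 : perp v 1 = v 0 := rfl
  rw [h0, h1, norm_neg]
  ring

lemma perp_neg (v : Plane) : perp (-v) = -perp v := by
  ext i
  fin_cases i <;> simp [perp]

lemma gradPerp_neg (K : ℝ → ℝ) (y : Plane) : gradPerp K (-y) = -gradPerp K y := by
  unfold gradPerp
  rw [norm_neg, perp_neg, smul_neg]

lemma norm_gradPerp_le {K : ℝ → ℝ} {M : ℝ} (hM : 0 ≤ M)
    (hb : ∀ r : ℝ, 1 ≤ r → |deriv K r| ≤ M) (y : Plane) (hy : 1 ≤ ‖y‖) :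
    ‖gradPerp K y‖ ≤ M := by
  have hy0 : (0:ℝ) < ‖y‖ := lt_of_lt_of_le one_pos hy
  rw [gradPerp, norm_smul, norm_perp, Real.norm_eq_abs, abs_div, abs_of_pos hy0,
    div_mul_cancel₀ _ (ne_of_gt hy0)]
  exact hb _ hy

open scoped Classical

def Vsum {N : ℕ} (a : Fin N → ℝ) : ℝ := ∑ i, |a i|

def propSubsets (N : ℕ) : Finset (Finset (Fin N)) :=
  Finset.univ.filter (fun P => P.Nonempty ∧ P ≠ Finset.univ)

def muMin {N : ℕ} (a : Fin N → ℝ) : ℝ :=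
  if h : (propSubsets N).Nonempty then
    (propSubsets N).inf' h (fun P => |∑ i ∈ P, a i|) else 1

lemma muMin_pos {N : ℕ} (a : Fin N → ℝ)
    (hcluster : ∀ P : Finset (Fin N), P.Nonempty → P ≠ Finset.univ → ∑ i ∈ P, a i ≠ 0) :
    0 < muMin a := by
  unfold muMin
  split_ifs with h
  · rw [Finset.lt_inf'_iff]
    intro P hP
    simp only [propSubsets, Finset.mem_filter] at hP
    exact abs_pos.mpr (hcluster P hP.2.1 hP.2.2)
  · norm_num

lemma muMin_le {N : ℕ} (a : Fin N → ℝ) {P : Finset (Fin N)} (h1 : P.Nonempty)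
    (h2 : P ≠ Finset.univ) : muMin a ≤ |∑ i ∈ P, a i| := by
  have hmem : P ∈ propSubsets N := by simp [propSubsets, h1, h2]
  unfold muMin
  rw [dif_pos ⟨P, hmem⟩]
  exact Finset.inf'_le _ hmem

def scaleFun (N : ℕ) (Cm : ℝ) : ℕ → ℝ
  | 0 => 2
  | k+1 => 2*N*(scaleFun N Cm k) + Cm + 2

lemma scaleFun_zero (N : ℕ) (Cm : ℝ) : scaleFun N Cm 0 = 2 := rfl

lemma scaleFun_succ (N : ℕ) (Cm : ℝ) (k : ℕ) :
    scaleFun N Cm (k+1) = 2*N*(scaleFun N Cm k) + Cm + 2 := rfl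

lemma scaleFun_two_le (N : ℕ) (hN : 1 ≤ N) {Cm : ℝ} (hCm : 0 ≤ Cm) (k : ℕ) :
    2 ≤ scaleFun N Cm k := by
  induction k with
  | zero => simp [scaleFun]
  | succ k ih =>
    have hN' : (1:ℝ) ≤ N := by exact_mod_cast hN
    simp only [scaleFun]
    nlinarith

lemma scaleFun_mono (N : ℕ) (hN : 1 ≤ N) {Cm : ℝ} (hCm : 0 ≤ Cm) :
    Monotone (scaleFun N Cm) := by
  apply monotone_nat_of_le_succ
  intro k
  have h2 := scaleFun_two_le N hN hCm k
  have hN' : (1:ℝ) ≤ N := by exact_mod_cast hN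
  simp only [scaleFun]
  nlinarith

lemma isClosed_exists_pairs {ι : Type*} (Q : Finset ι) {s : Set ℝ} (hs : IsClosed s)
    (F : ι → ℝ → ℝ) (hF : ∀ p ∈ Q, ContinuousOn (F p) s) (t : ι → Set ℝ)
    (ht : ∀ p, IsClosed (t p)) :
    IsClosed {u | u ∈ s ∧ ∃ p ∈ Q, F p u ∈ t p} := by
  have heq : {u | u ∈ s ∧ ∃ p ∈ Q, F p u ∈ t p} = ⋃ p ∈ Q, (s ∩ F p ⁻¹' t p) := by
    ext u
    simp only [Set.mem_setOf_eq, Set.mem_iUnion, Set.mem_inter_iff, Set.mem_preimage]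
    constructor
    · rintro ⟨hu, p, hp, hFp⟩; exact ⟨p, hp, hu, hFp⟩
    · rintro ⟨p, hp, hu, hFp⟩; exact ⟨hu, p, hp, hFp⟩
  rw [heq]
  exact isClosed_biUnion_finset fun p hp => (hF p hp).preimage_isClosed_of_isClosed hs (ht p)

lemma isClosed_forall_pairs {ι : Type*} (Q : Finset ι) {s : Set ℝ} (hs : IsClosed s)
    (F : ι → ℝ → ℝ) (hF : ∀ p ∈ Q, ContinuousOn (F p) s) (t : ι → Set ℝ)
    (ht : ∀ p, IsClosed (t p)) :
    IsClosed {u | u ∈ s ∧ ∀ p ∈ Q, F p u ∈ t p} := by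
  have heq : {u | u ∈ s ∧ ∀ p ∈ Q, F p u ∈ t p} = s ∩ ⋂ p ∈ Q, (s ∩ F p ⁻¹' t p) := by
    ext u
    simp only [Set.mem_setOf_eq, Set.mem_iInter, Set.mem_inter_iff, Set.mem_preimage]
    constructor
    · rintro ⟨hu, h⟩; exact ⟨hu, fun p hp => ⟨hu, h p hp⟩⟩
    · rintro ⟨hu, h⟩; exact ⟨hu, fun p hp => (h p hp).2⟩
  rw [heq]
  exact hs.inter (isClosed_biInter fun p hp => (hF p hp).preimage_isClosed_of_isClosed hs (ht p))

lemma Vsum_nonneg {N : ℕ} (a : Fin N → ℝ) : 0 ≤ Vsum a :=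
  Finset.sum_nonneg fun i _ => abs_nonneg _

lemma norm_tri (u v w : Plane) : ‖u - w‖ ≤ ‖u - v‖ + ‖v - w‖ := by
  simpa [dist_eq_norm] using dist_triangle u v w

section Sol

variable {N : ℕ} {a : Fin N → ℝ} {G : ℝ → ℝ} {T : ℝ} {x : Fin N → ℝ → Plane}

lemma sol_continuousOn (hsol : IsVortexSolution N a G T x) (i : Fin N) :
    ContinuousOn (x i) (Set.Ico 0 T) :=
  fun t ht => (hsol.2 i t ht).continuousWithinAt

lemma dist_continuousOn (hsol : IsVortexSolution N a G T x) {s : Set ℝ}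
    (hsub : s ⊆ Set.Ico 0 T) (i j : Fin N) :
    ContinuousOn (fun u => ‖x i u - x j u‖) s :=
  (((sol_continuousOn hsol i).mono hsub).sub ((sol_continuousOn hsol j).mono hsub)).norm

lemma intra_cancel (y : Fin N → Plane) (Q : Finset (Fin N)) :
    ∑ k ∈ Q, ∑ l ∈ Q.erase k, (a k * a l) • gradPerp G (y k - y l) = 0 := by
  set S := ∑ k ∈ Q, ∑ l ∈ Q.erase k, (a k * a l) • gradPerp G (y k - y l) with hS
  have hswap : S = ∑ l ∈ Q, ∑ k ∈ Q.erase l, (a k * a l) • gradPerp G (y k - y l) := by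
    rw [hS]
    refine Finset.sum_comm' ?_
    intro k l
    simp only [Finset.mem_erase]
    constructor
    · rintro ⟨hk, hne, hl⟩; exact ⟨⟨hne.symm, hk⟩, hl⟩
    · rintro ⟨⟨hne, hk⟩, hl⟩; exact ⟨hk, hne.symm, hl⟩
  have hneg : ∀ k l : Fin N, (a k * a l) • gradPerp G (y k - y l)
      = -((a l * a k) • gradPerp G (y l - y k)) := by
    intro k l
    have h1 : y k - y l = -(y l - y k) := by abel
    rw [h1, gradPerp_neg, smul_neg, mul_comm]
  have h2 : S = -S := by
    calc S = ∑ l ∈ Q, ∑ k ∈ Q.erase l, (a k * a l) • gradPerp G (y k - y l) := hswap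
    _ = ∑ l ∈ Q, ∑ k ∈ Q.erase l, -((a l * a k) • gradPerp G (y l - y k)) := by
        exact Finset.sum_congr rfl fun l _ => Finset.sum_congr rfl fun k _ => hneg k l
    _ = -S := by rw [hS]; simp [Finset.sum_neg_distrib]
  have h3 : (2:ℝ) • S = 0 := by
    rw [two_smul]
    nth_rewrite 1 [h2]
    exact neg_add_cancel S
  rcases smul_eq_zero.mp h3 with h | h
  · norm_num at h
  · exact h

lemma center_spread (Q : Finset (Fin N)) (hQ0 : (∑ k ∈ Q, a k) ≠ 0) (u : ℝ)
    {i : Fin N} (hi : i ∈ Q) {D : ℝ} (hD : ∀ k ∈ Q, ‖x i u - x k u‖ ≤ D) :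
    ‖x i u - (∑ k ∈ Q, a k)⁻¹ • ∑ k ∈ Q, a k • x k u‖ ≤ (Vsum a * D) / |∑ k ∈ Q, a k| := by
  have hD0 : 0 ≤ D := le_trans (by simp) (hD i hi)
  have key : x i u - (∑ k ∈ Q, a k)⁻¹ • ∑ k ∈ Q, a k • x k u
      = (∑ k ∈ Q, a k)⁻¹ • ∑ k ∈ Q, a k • (x i u - x k u) := by
    have h1 : ∑ k ∈ Q, a k • (x i u - x k u)
        = (∑ k ∈ Q, a k) • x i u - ∑ k ∈ Q, a k • x k u := by
      rw [Finset.sum_smul]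
      rw [← Finset.sum_sub_distrib]
      exact Finset.sum_congr rfl fun k _ => smul_sub _ _ _
    rw [h1, smul_sub, inv_smul_smul₀ hQ0]
  have hnorm : ‖∑ k ∈ Q, a k • (x i u - x k u)‖ ≤ Vsum a * D := by
    calc ‖∑ k ∈ Q, a k • (x i u - x k u)‖ ≤ ∑ k ∈ Q, ‖a k • (x i u - x k u)‖ :=
          norm_sum_le _ _
    _ ≤ ∑ k ∈ Q, |a k| * D := Finset.sum_le_sum fun k hk => by
          rw [norm_smul, Real.norm_eq_abs]
          exact mul_le_mul_of_nonneg_left (hD k hk) (abs_nonneg _)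
    _ = (∑ k ∈ Q, |a k|) * D := (Finset.sum_mul _ _ _).symm
    _ ≤ Vsum a * D := mul_le_mul_of_nonneg_right
          (Finset.sum_le_sum_of_subset_of_nonneg (Finset.subset_univ Q)
            (fun _ _ _ => abs_nonneg _)) hD0
  rw [key, norm_smul, Real.norm_eq_abs, abs_inv, div_eq_inv_mul]
  exact mul_le_mul_of_nonneg_left hnorm (inv_nonneg.mpr (abs_nonneg _))


lemma center_drift (hsol : IsVortexSolution N a G T x) {M : ℝ} (hM : 0 ≤ M)
    (hMb : ∀ r : ℝ, 1 ≤ r → |deriv G r| ≤ M) (Q : Finset (Fin N)) {τ te : ℝ}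
    (hτ : τ ≤ te) (hsub : Set.Icc τ te ⊆ Set.Ico 0 T)
    (hsep : ∀ u ∈ Set.Icc τ te, ∀ k ∈ Q, ∀ l, l ∉ Q → 1 ≤ ‖x k u - x l u‖)
    {t : ℝ} (ht : t ∈ Set.Icc τ te) :
    ‖(∑ k ∈ Q, a k • x k t) - ∑ k ∈ Q, a k • x k τ‖ ≤ (Vsum a * Vsum a * M) * (t - τ) := by
  classical
  set Y : ℝ → Plane := fun u => ∑ k ∈ Q, a k • x k u with hY
  set D : ℝ → Plane := fun u =>
    ∑ k ∈ Q, ∑ l ∈ Finset.univ \ Q, (a k * a l) • gradPerp G (x k u - x l u) with hDdef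
  have hderiv : ∀ u ∈ Set.Icc τ te, HasDerivWithinAt Y (D u) (Set.Icc τ te) u := by
    intro u hu
    have h1 : HasDerivWithinAt Y
        (∑ k ∈ Q, a k • ∑ j ∈ Finset.univ.erase k, a j • gradPerp G (x k u - x j u))
        (Set.Icc τ te) u :=
      HasDerivWithinAt.fun_sum fun k _ => ((hsol.2 k u (hsub hu)).mono hsub).const_smul (a k)
    convert h1 using 1
    have hsplit : ∀ k, k ∈ Q → (Finset.univ.erase k : Finset (Fin N))
        = Q.erase k ∪ (Finset.univ \ Q) := by
      intro k hk
      ext l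
      simp only [Finset.mem_erase, Finset.mem_union, Finset.mem_sdiff, Finset.mem_univ,
        true_and, and_true]
      constructor
      · intro hl
        by_cases hlQ : l ∈ Q
        · exact Or.inl ⟨hl, hlQ⟩
        · exact Or.inr hlQ
      · rintro (⟨hl, _⟩ | hl)
        · exact hl
        · rintro rfl; exact hl hk
    have hdisj : ∀ k : Fin N, Disjoint (Q.erase k) (Finset.univ \ Q) := by
      intro k
      refine Finset.disjoint_left.mpr ?_
      intro l hl hl2
      exact (Finset.mem_sdiff.mp hl2).2 (Finset.mem_of_mem_erase hl)
    calc D u = 0 + D u := (zero_add _).symm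
    _ = (∑ k ∈ Q, ∑ l ∈ Q.erase k, (a k * a l) • gradPerp G (x k u - x l u)) + D u := by
        rw [intra_cancel]
    _ = ∑ k ∈ Q, ((∑ l ∈ Q.erase k, (a k * a l) • gradPerp G (x k u - x l u))
          + ∑ l ∈ Finset.univ \ Q, (a k * a l) • gradPerp G (x k u - x l u)) := by
        rw [hDdef, ← Finset.sum_add_distrib]
    _ = ∑ k ∈ Q, ∑ l ∈ Finset.univ.erase k, (a k * a l) • gradPerp G (x k u - x l u) := by
        refine Finset.sum_congr rfl fun k hk => ?_
        rw [hsplit k hk, Finset.sum_union (hdisj k)]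
    _ = ∑ k ∈ Q, a k • ∑ j ∈ Finset.univ.erase k, a j • gradPerp G (x k u - x j u) := by
        refine Finset.sum_congr rfl fun k _ => ?_
        rw [Finset.smul_sum]
        exact Finset.sum_congr rfl fun l _ => (smul_smul _ _ _).symm
  have hbound : ∀ u ∈ Set.Icc τ te, ‖D u‖ ≤ Vsum a * Vsum a * M := by
    intro u hu
    have hV : ∀ (s : Finset (Fin N)), ∑ k ∈ s, |a k| ≤ Vsum a := fun s =>
      Finset.sum_le_sum_of_subset_of_nonneg (Finset.subset_univ s) (fun _ _ _ => abs_nonneg _)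
    calc ‖D u‖ ≤ ∑ k ∈ Q, ‖∑ l ∈ Finset.univ \ Q, (a k * a l) • gradPerp G (x k u - x l u)‖ :=
          norm_sum_le _ _
    _ ≤ ∑ k ∈ Q, |a k| * (Vsum a * M) := by
        refine Finset.sum_le_sum fun k hk => ?_
        calc ‖∑ l ∈ Finset.univ \ Q, (a k * a l) • gradPerp G (x k u - x l u)‖
            ≤ ∑ l ∈ Finset.univ \ Q, ‖(a k * a l) • gradPerp G (x k u - x l u)‖ :=
              norm_sum_le _ _
        _ ≤ ∑ l ∈ Finset.univ \ Q, |a k| * (|a l| * M) := by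
            refine Finset.sum_le_sum fun l hl => ?_
            rw [norm_smul, Real.norm_eq_abs, abs_mul, mul_assoc]
            refine mul_le_mul_of_nonneg_left ?_ (abs_nonneg _)
            refine mul_le_mul_of_nonneg_left ?_ (abs_nonneg _)
            exact norm_gradPerp_le hM hMb _
              (hsep u hu k hk l (Finset.mem_sdiff.mp hl).2)
        _ = |a k| * ((∑ l ∈ Finset.univ \ Q, |a l|) * M) := by
            rw [← Finset.mul_sum, ← Finset.sum_mul]
        _ ≤ |a k| * (Vsum a * M) := by
            refine mul_le_mul_of_nonneg_left ?_ (abs_nonneg _)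
            exact mul_le_mul_of_nonneg_right (hV _) hM
    _ = (∑ k ∈ Q, |a k|) * (Vsum a * M) := (Finset.sum_mul _ _ _).symm
    _ ≤ Vsum a * (Vsum a * M) := mul_le_mul_of_nonneg_right (hV _)
          (mul_nonneg (by unfold Vsum; positivity) hM)
    _ = Vsum a * Vsum a * M := by ring
  have hmvt := Convex.norm_image_sub_le_of_norm_hasDerivWithin_le hderiv hbound
    (convex_Icc τ te) (Set.mem_Icc.mpr ⟨le_refl τ, hτ⟩) ht
  rwa [Real.norm_eq_abs, abs_of_nonneg (by linarith [ht.1])] at hmvt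

end Sol

lemma exists_partition {N : ℕ} (y : Fin N → Plane) (s : ℝ) (hs : 0 < s) :
    ∀ (n : ℕ) (P : Finset (Fin N)), P.card ≤ n →
    ∃ Pt : Finset (Finset (Fin N)),
      Pt.card ≤ P.card ∧
      (∀ A ∈ Pt, A.Nonempty) ∧ (∀ A ∈ Pt, A ⊆ P) ∧
      (∀ i ∈ P, ∃ A ∈ Pt, i ∈ A) ∧
      (∀ A ∈ Pt, ∀ i ∈ A, ∀ j ∈ A, ‖y i - y j‖ ≤ 2*N*s) ∧
      (∀ A ∈ Pt, ∀ B ∈ Pt, A ≠ B → ∀ i ∈ A, ∀ j ∈ B, s < ‖y i - y j‖) := by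
  intro n
  induction n with
  | zero =>
    intro P hP
    rw [Nat.le_zero, Finset.card_eq_zero] at hP
    subst hP
    exact ⟨∅, by simp, by simp, by simp, by simp, by simp, by simp⟩
  | succ n ih =>
    intro P hP
    rcases P.eq_empty_or_nonempty with rfl | ⟨i₀, hi₀⟩
    · exact ⟨∅, by simp, by simp, by simp, by simp, by simp, by simp⟩
    set Ak : ℕ → Finset (Fin N) := fun k => P.filter (fun j => ‖y j - y i₀‖ ≤ k*s) with hAk
    have hmono : ∀ k, Ak k ⊆ Ak (k+1) := by
      intro k
      intro j hj
      simp only [hAk, Finset.mem_filter] at hj ⊢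
      refine ⟨hj.1, le_trans hj.2 ?_⟩
      have h1 : ((k:ℝ)) ≤ ((k+1:ℕ):ℝ) := by exact_mod_cast Nat.le_succ k
      nlinarith
    have hi₀mem : ∀ k, i₀ ∈ Ak k := by
      intro k
      simp only [hAk, Finset.mem_filter]
      refine ⟨hi₀, ?_⟩
      simp only [sub_self, norm_zero]
      positivity
    have hstab : ∃ k, k < P.card ∧ Ak k = Ak (k+1) := by
      by_contra hcon
      push_neg at hcon
      have hgrow : ∀ k, k ≤ P.card → k + 1 ≤ (Ak k).card := by
        intro k
        induction k with
        | zero => intro _; exact Finset.card_pos.mpr ⟨i₀, hi₀mem 0⟩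
        | succ k ihk =>
          intro hk
          have h1 : k + 1 ≤ (Ak k).card := ihk (le_of_lt (Nat.lt_of_succ_le hk))
          have h2 : Ak k ⊂ Ak (k+1) :=
            Finset.ssubset_iff_subset_ne.mpr ⟨hmono k, hcon k (Nat.lt_of_succ_le hk)⟩
          have := Finset.card_lt_card h2
          omega
      have h1 := hgrow P.card (le_refl _)
      have h2 : (Ak P.card).card ≤ P.card := Finset.card_le_card (Finset.filter_subset _ _)
      omega
    obtain ⟨k, hkcard, hkstab⟩ := hstab
    have hkN : (k:ℝ) ≤ (N:ℝ) := by
      have : P.card ≤ N := by simpa using Finset.card_le_univ P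
      exact_mod_cast le_of_lt (lt_of_lt_of_le hkcard this)
    by_cases hful : Ak k = P
    · refine ⟨{P}, ?_, ?_, ?_, ?_, ?_, ?_⟩
      · simpa using Finset.card_pos.mpr ⟨i₀, hi₀⟩
      · intro A hA; rw [Finset.mem_singleton] at hA; subst hA; exact ⟨i₀, hi₀⟩
      · intro A hA; rw [Finset.mem_singleton] at hA; subst hA; exact Finset.Subset.refl _
      · intro i hi; exact ⟨P, Finset.mem_singleton_self P, hi⟩
      · intro A hA i hi j hj
        rw [Finset.mem_singleton] at hA; subst hA
        have hiA : i ∈ Ak k := hful ▸ hi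
        have hjA : j ∈ Ak k := hful ▸ hj
        simp only [hAk, Finset.mem_filter] at hiA hjA
        have htri : ‖y i - y j‖ ≤ ‖y i - y i₀‖ + ‖y j - y i₀‖ := by
          have := dist_triangle (y i) (y i₀) (y j)
          simp only [dist_eq_norm] at this
          rw [show ‖y j - y i₀‖ = ‖y i₀ - y j‖ from norm_sub_rev _ _]
          linarith
        nlinarith [hiA.2, hjA.2]
      · intro A hA B hB hAB
        rw [Finset.mem_singleton] at hA hB
        exact absurd (hA.trans hB.symm) hAB
    · have hAsub : Ak k ⊆ P := Finset.filter_subset _ _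
      have hAss : Ak k ⊂ P := Finset.ssubset_iff_subset_ne.mpr ⟨hAsub, hful⟩
      set B := P \ Ak k with hB
      have hi₀A : i₀ ∈ Ak k := hi₀mem k
      have hcardA : (Ak k).card ≤ n := by
        have := Finset.card_lt_card hAss
        omega
      have hcardB : B.card ≤ n := by
        have h1 : B ⊆ P := Finset.sdiff_subset
        have h2 : i₀ ∉ B := by simp [hB, hi₀A]
        have : B ⊂ P := Finset.ssubset_iff_subset_ne.mpr ⟨h1, fun h => h2 (h ▸ hi₀)⟩
        have := Finset.card_lt_card this
        omega
      obtain ⟨PA, hPA1, hPA2, hPA3, hPA4, hPA5, hPA6⟩ := ih (Ak k) hcardA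
      obtain ⟨PB, hPB1, hPB2, hPB3, hPB4, hPB5, hPB6⟩ := ih B hcardB
      have hcross : ∀ i ∈ Ak k, ∀ j ∈ B, s < ‖y i - y j‖ := by
        intro i hi j hj
        simp only [hAk, Finset.mem_filter] at hi
        have hjB : j ∈ P ∧ j ∉ Ak k := Finset.mem_sdiff.mp hj
        have hj2 : ¬(‖y j - y i₀‖ ≤ (k+1:ℕ)*s) := by
          intro hcon2
          exact hjB.2 (hkstab ▸ (by simp only [hAk, Finset.mem_filter]; exact ⟨hjB.1, hcon2⟩))
        push_neg at hj2
        have htri : ‖y j - y i₀‖ ≤ ‖y j - y i‖ + ‖y i - y i₀‖ := by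
          have := dist_triangle (y j) (y i) (y i₀)
          simpa only [dist_eq_norm] using this
        have hcast : ((k+1:ℕ):ℝ) = (k:ℝ) + 1 := by push_cast; ring
        rw [show ‖y i - y j‖ = ‖y j - y i‖ from norm_sub_rev _ _]
        rw [hcast] at hj2
        nlinarith [hi.2]
      refine ⟨PA ∪ PB, ?_, ?_, ?_, ?_, ?_, ?_⟩
      · calc (PA ∪ PB).card ≤ PA.card + PB.card := Finset.card_union_le _ _
        _ ≤ (Ak k).card + B.card := Nat.add_le_add hPA1 hPB1
        _ = P.card := by
            rw [hB, Finset.card_sdiff_of_subset hAsub]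
            have := Finset.card_le_card hAsub
            omega
      · intro A hA
        rcases Finset.mem_union.mp hA with h | h
        · exact hPA2 A h
        · exact hPB2 A h
      · intro A hA
        rcases Finset.mem_union.mp hA with h | h
        · exact (hPA3 A h).trans hAsub
        · exact (hPB3 A h).trans Finset.sdiff_subset
      · intro i hi
        by_cases hiA : i ∈ Ak k
        · obtain ⟨A, hA, hiA'⟩ := hPA4 i hiA
          exact ⟨A, Finset.mem_union_left _ hA, hiA'⟩
        · obtain ⟨A, hA, hiA'⟩ := hPB4 i (Finset.mem_sdiff.mpr ⟨hi, hiA⟩)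
          exact ⟨A, Finset.mem_union_right _ hA, hiA'⟩
      · intro A hA
        rcases Finset.mem_union.mp hA with h | h
        · exact hPA5 A h
        · exact hPB5 A h
      · intro A hA B' hB' hAB i hi j hj
        rcases Finset.mem_union.mp hA with h1 | h1 <;> rcases Finset.mem_union.mp hB' with h2 | h2
        · exact hPA6 A h1 B' h2 hAB i hi j hj
        · exact hcross i (hPA3 A h1 hi) j (hPB3 B' h2 hj)
        · rw [show ‖y i - y j‖ = ‖y j - y i‖ from norm_sub_rev _ _]
          exact hcross j (hPA3 B' h2 hj) i (hPB3 A h1 hi)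
        · exact hPB6 A h1 B' h2 hAB i hi j hj

set_option maxHeartbeats 4000000 in
lemma main_lemma {N : ℕ} (hN : 1 ≤ N) (a : Fin N → ℝ)
    (hcluster : ∀ P : Finset (Fin N), P.Nonempty → P ≠ Finset.univ → ∑ i ∈ P, a i ≠ 0)
    (T M : ℝ) (hT : 0 < T) (hM : 0 ≤ M) :
    ∀ m : ℕ, ∃ C : ℝ, 0 ≤ C ∧ ∀ (G : ℝ → ℝ) (x : Fin N → ℝ → Plane),
      IsVortexSolution N a G T x → (∀ r : ℝ, 1 ≤ r → |deriv G r| ≤ M) →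
      ∀ P : Finset (Fin N), P.card ≤ m → ∀ t1 t2 : ℝ, t1 ≤ t2 →
      Set.Icc t1 t2 ⊆ Set.Ico 0 T →
      (∀ u ∈ Set.Icc t1 t2, ∀ i ∈ P, ∀ j, j ∉ P → 1 ≤ ‖x i u - x j u‖) →
      ∀ t ∈ Set.Icc t1 t2, ∀ i ∈ P, ∀ j ∈ P, ∃ k ∈ P, ∃ l ∈ P,
        ‖x i t - x j t‖ ≤ ‖x k t1 - x l t1‖ + C := by
  intro m
  induction m with
  | zero =>
    refine ⟨0, le_refl 0, ?_⟩
    intro G x _ _ P hcard t1 t2 _ _ _ t _ i hi j hj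
    rw [Nat.le_zero, Finset.card_eq_zero] at hcard
    subst hcard
    exact absurd hi (Finset.notMem_empty i)
  | succ m ih =>
    obtain ⟨Cm, hCm0, HM⟩ := ih
    have hμ0 : 0 < muMin a := muMin_pos a hcluster
    have hV0 : 0 ≤ Vsum a := Vsum_nonneg a
    set V : ℝ := Vsum a with hVdef
    set μ : ℝ := muMin a with hμdef
    set Λ : ℝ := V / μ with hΛdef
    have hΛ0 : 0 ≤ Λ := div_nonneg hV0 (le_of_lt hμ0)
    set K' : ℝ := V * V * M / μ with hK'def
    have hK'0 : 0 ≤ K' := by positivity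
    set g : ℕ → ℝ := scaleFun N Cm with hgdef
    have hg2 : ∀ k, 2 ≤ g k := scaleFun_two_le N hN hCm0
    have hgmono : Monotone g := scaleFun_mono N hN hCm0
    have hgN0 : 0 ≤ g N := le_trans (by norm_num) (hg2 N)
    have hNR : (0:ℝ) ≤ (N:ℝ) := Nat.cast_nonneg N
    set R : ℝ := 2*N*(g N) + Cm + 1 with hRdef
    have hR0 : 0 ≤ R := by
      have h := mul_nonneg (mul_nonneg (by norm_num : (0:ℝ) ≤ 2) hNR) hgN0
      rw [hRdef]; linarith
    have hgNN : g (N - N) = 2 := by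
      rw [Nat.sub_self, hgdef, scaleFun_zero]
    refine ⟨R + (4*Λ*(g N))*N + 2*K'*T, ?_, ?_⟩
    · have h1 : 0 ≤ 4*Λ*(g N) := mul_nonneg (mul_nonneg (by norm_num) hΛ0) hgN0
      have h2 : 0 ≤ (4*Λ*(g N))*(N:ℝ) := mul_nonneg h1 hNR
      have h3 : 0 ≤ 2*K'*T := mul_nonneg (mul_nonneg (by norm_num) hK'0) hT.le
      linarith
    intro G x hsol hMb P hcardP t1 t2 ht12 hsub12 hsepP
    have hcardPN : P.card ≤ N := by simpa using Finset.card_le_univ P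
    -- ================= inner induction on the number of clusters =================
    have inner : ∀ c : ℕ, c ≤ N → ∀ τ t' : ℝ, t1 ≤ τ → τ ≤ t' → t' ≤ t2 →
        (∀ u ∈ Set.Icc τ t', ∃ k ∈ P, ∃ l ∈ P, R ≤ ‖x k u - x l u‖) →
        ∀ Pt : Finset (Finset (Fin N)), Pt.card ≤ c →
        (∀ A ∈ Pt, A.Nonempty) → (∀ A ∈ Pt, A ⊆ P) →
        (∀ i ∈ P, ∃ A ∈ Pt, i ∈ A) →
        (∀ A ∈ Pt, ∀ p ∈ A, ∀ q ∈ A, ‖x p τ - x q τ‖ ≤ 2*N*(g (N-c))) →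
        (∀ A ∈ Pt, ∀ B ∈ Pt, A ≠ B → ∀ p ∈ A, ∀ q ∈ B, g (N-c) < ‖x p τ - x q τ‖) →
        ∀ t ∈ Set.Icc τ t', ∀ i ∈ P, ∀ j ∈ P, ∃ k ∈ P, ∃ l ∈ P,
          ‖x i t - x j t‖ ≤ ‖x k τ - x l τ‖ + (4*Λ*(g N))*c + 2*K'*(t - τ) := by
      intro c
      induction c with
      | zero =>
        intro _ τ t' _ hτt' _ hlow Pt hcardPt _ _ hcover _ _ t _ i hi j hj
        obtain ⟨k, hk, -⟩ := hlow τ ⟨le_refl τ, hτt'⟩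
        obtain ⟨A, hA, -⟩ := hcover k hk
        rw [Nat.le_zero, Finset.card_eq_zero] at hcardPt
        subst hcardPt
        exact absurd hA (Finset.notMem_empty A)
      | succ c ihc =>
        intro hcN τ t' ht1τ hτt' ht't2 hlow Pt hcardPt hPtne hPtsub hcover hdiam hsepτ
        set σ : ℝ := g (N - (c+1)) with hσdef
        set Δ : ℝ := 2*N*σ + Cm with hΔdef
        have hσ2 : 2 ≤ σ := hg2 _
        have hσgN : σ ≤ g N := hgmono (Nat.sub_le _ _)
        have hΔ0 : 0 ≤ Δ := by
          have h := mul_nonneg (mul_nonneg (by norm_num : (0:ℝ) ≤ 2) hNR) (by linarith : (0:ℝ) ≤ σ)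
          rw [hΔdef]; linarith
        have hσ' : g (N - c) = Δ + 2 := by
          rw [hΔdef, hσdef, hgdef, show N - c = (N - (c+1)) + 1 by omega, scaleFun_succ]
        have hΔgN : Δ ≤ g N := by
          have := hgmono (show N - c ≤ N from Nat.sub_le _ _)
          rw [hσ'] at this
          linarith
        have hΔR : Δ ≤ R := by
          have h := mul_le_mul_of_nonneg_left hσgN (mul_nonneg (by norm_num : (0:ℝ) ≤ 2) hNR)
          rw [hRdef, hΔdef]; linarith
        -- every part is a proper subset of P
        have hApP : ∀ A ∈ Pt, A ≠ P := by
          intro A hA hAP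
          obtain ⟨k, hk, l, hl, hRkl⟩ := hlow τ ⟨le_refl τ, hτt'⟩
          have h1 := hdiam A hA k (by rw [hAP]; exact hk) l (by rw [hAP]; exact hl)
          have h2 : 2*(N:ℝ)*σ ≤ 2*N*(g N) :=
            mul_le_mul_of_nonneg_left hσgN (mul_nonneg (by norm_num) hNR)
          rw [hRdef] at hRkl
          linarith
        have hAcard : ∀ A ∈ Pt, A.card ≤ m := by
          intro A hA
          have h1 : A ⊂ P := Finset.ssubset_iff_subset_ne.mpr ⟨hPtsub A hA, hApP A hA⟩
          have := Finset.card_lt_card h1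
          omega
        have hAneuniv : ∀ A ∈ Pt, A ≠ Finset.univ := by
          intro A hA hAu
          have h1 : A ⊂ P := Finset.ssubset_iff_subset_ne.mpr ⟨hPtsub A hA, hApP A hA⟩
          have h2 := Finset.card_lt_card h1
          have h3 : A.card = N := by rw [hAu]; simpa using rfl
          omega
        have haA : ∀ A ∈ Pt, (∑ k ∈ A, a k) ≠ 0 :=
          fun A hA => hcluster A (hPtne A hA) (hAneuniv A hA)
        have hμA : ∀ A ∈ Pt, μ ≤ |∑ k ∈ A, a k| :=
          fun A hA => muMin_le a (hPtne A hA) (hAneuniv A hA)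
        -- separation of a part from its complement, given cross-part separation
        have hsepA : ∀ te : ℝ, τ ≤ te → te ≤ t' →
            (∀ u ∈ Set.Icc τ te, ∀ A ∈ Pt, ∀ B ∈ Pt, A ≠ B → ∀ p ∈ A, ∀ q ∈ B,
              1 ≤ ‖x p u - x q u‖) →
            ∀ A ∈ Pt, ∀ u ∈ Set.Icc τ te, ∀ k ∈ A, ∀ l, l ∉ A → 1 ≤ ‖x k u - x l u‖ := by
          intro te hτte htet' hsep1 A hA u hu k hk l hl
          by_cases hlP : l ∈ P
          · obtain ⟨B, hB, hlB⟩ := hcover l hlP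
            have hne : A ≠ B := fun h => hl (h ▸ hlB)
            exact hsep1 u hu A hA B hB hne k hk l hlB
          · have huIcc : u ∈ Set.Icc t1 t2 :=
              ⟨le_trans ht1τ hu.1, le_trans hu.2 (le_trans htet' ht't2)⟩
            exact hsepP u huIcc k (hPtsub A hA hk) l hlP
        have hIccT12 : ∀ te : ℝ, te ≤ t' → Set.Icc τ te ⊆ Set.Ico 0 T := by
          intro te htet' u hu
          exact hsub12 ⟨le_trans ht1τ hu.1, le_trans hu.2 (le_trans htet' ht't2)⟩
        -- diameter of each part stays ≤ Δ while cross-part separation holds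
        have hpartdiam : ∀ te : ℝ, τ ≤ te → te ≤ t' →
            (∀ u ∈ Set.Icc τ te, ∀ A ∈ Pt, ∀ B ∈ Pt, A ≠ B → ∀ p ∈ A, ∀ q ∈ B,
              1 ≤ ‖x p u - x q u‖) →
            ∀ A ∈ Pt, ∀ u ∈ Set.Icc τ te, ∀ p ∈ A, ∀ q ∈ A, ‖x p u - x q u‖ ≤ Δ := by
          intro te hτte htet' hsep1 A hA u hu p hp q hq
          obtain ⟨k, hk, l, hl, hkl⟩ := HM G x hsol hMb A (hAcard A hA) τ te hτte
            (hIccT12 te htet') (hsepA te hτte htet' hsep1 A hA) u hu p hp q hq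
          have := hdiam A hA k hk l hl
          rw [hΔdef]
          linarith
        -- the one-stage estimate
        have stage : ∀ τe : ℝ, τ ≤ τe → τe ≤ t' →
            (∀ u ∈ Set.Icc τ τe, ∀ A ∈ Pt, ∀ B ∈ Pt, A ≠ B → ∀ p ∈ A, ∀ q ∈ B,
              1 ≤ ‖x p u - x q u‖) →
            ∀ t ∈ Set.Icc τ τe, ∀ i ∈ P, ∀ j ∈ P, ∃ k ∈ P, ∃ l ∈ P,
              ‖x i t - x j t‖ ≤ ‖x k τ - x l τ‖ + 4*Λ*Δ + 2*K'*(t - τ) := by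
          intro τe hττe hτet' hsep1 t ht i hi j hj
          have htτ : τ ≤ t := ht.1
          have htt' : t ≤ t' := le_trans ht.2 hτet'
          have h4ΛΔ : 0 ≤ 4*Λ*Δ := mul_nonneg (mul_nonneg (by norm_num) hΛ0) hΔ0
          have hKτ : 0 ≤ 2*K'*(t - τ) :=
            mul_nonneg (mul_nonneg (by norm_num) hK'0) (by linarith [ht.1])
          obtain ⟨A, hA, hiA⟩ := hcover i hi
          obtain ⟨B, hB, hjB⟩ := hcover j hj
          by_cases hAB : A = B
          · subst hAB
            obtain ⟨k₀, hk₀, l₀, hl₀, hRk₀⟩ := hlow τ ⟨le_refl τ, hτt'⟩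
            refine ⟨k₀, hk₀, l₀, hl₀, ?_⟩
            have h1 : ‖x i t - x j t‖ ≤ Δ :=
              hpartdiam τe hττe hτet' hsep1 A hA t ht i hiA j hjB
            linarith
          · -- two different parts: use the centers
            have hsub1 : ∀ u ∈ Set.Icc τ t, u ∈ Set.Icc τ τe := fun u hu => ⟨hu.1, le_trans hu.2 ht.2⟩
            have hcenter : ∀ A' ∈ Pt, ∀ p, p ∈ A' →
                ‖x p t - (∑ k ∈ A', a k)⁻¹ • ∑ k ∈ A', a k • x k t‖ ≤ Λ * Δ ∧
                ‖x p τ - (∑ k ∈ A', a k)⁻¹ • ∑ k ∈ A', a k • x k τ‖ ≤ Λ * Δ ∧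
                ‖((∑ k ∈ A', a k)⁻¹ • ∑ k ∈ A', a k • x k t)
                  - (∑ k ∈ A', a k)⁻¹ • ∑ k ∈ A', a k • x k τ‖ ≤ K' * (t - τ) := by
              intro A' hA' p hp
              have h0 := haA A' hA'
              have hμA' := hμA A' hA'
              have habs0 : 0 < |∑ k ∈ A', a k| := abs_pos.mpr h0
              have hVD : ∀ u ∈ Set.Icc τ t,
                  ‖x p u - (∑ k ∈ A', a k)⁻¹ • ∑ k ∈ A', a k • x k u‖ ≤ Λ * Δ := by
                intro u hu
                have hsp := center_spread (a := a) (x := x) A' h0 u hp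
                  (D := Δ) (fun k hk => hpartdiam τe hττe hτet' hsep1 A' hA' u (hsub1 u hu) p hp k hk)
                refine le_trans hsp ?_
                have h1 : (Vsum a*Δ)/|∑ k ∈ A', a k| ≤ (Vsum a*Δ)/μ :=
                  div_le_div_of_nonneg_left (mul_nonneg hV0 hΔ0) hμ0 hμA'
                have h2 : (Vsum a*Δ)/μ = Λ * Δ := by rw [hΛdef, hVdef]; ring
                linarith
              refine ⟨hVD t ⟨htτ, le_refl t⟩, hVD τ ⟨le_refl τ, htτ⟩, ?_⟩
              have hdr := center_drift (a := a) hsol hM hMb A' (hτ := htτ)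
                (hsub := hIccT12 t htt')
                (hsep := fun u hu k hk l hl => hsepA τe hττe hτet' hsep1 A' hA' u (hsub1 u hu) k hk l hl)
                (ht := Set.mem_Icc.mpr ⟨htτ, le_refl t⟩)
              have heq : ((∑ k ∈ A', a k)⁻¹ • ∑ k ∈ A', a k • x k t)
                  - (∑ k ∈ A', a k)⁻¹ • ∑ k ∈ A', a k • x k τ
                  = (∑ k ∈ A', a k)⁻¹ • ((∑ k ∈ A', a k • x k t) - ∑ k ∈ A', a k • x k τ) := by
                rw [smul_sub]
              rw [heq, norm_smul, Real.norm_eq_abs, abs_inv]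
              have h3 : |∑ k ∈ A', a k|⁻¹ ≤ μ⁻¹ := by
                apply inv_anti₀ hμ0 hμA'
              calc |∑ k ∈ A', a k|⁻¹ * ‖(∑ k ∈ A', a k • x k t) - ∑ k ∈ A', a k • x k τ‖
                  ≤ μ⁻¹ * ‖(∑ k ∈ A', a k • x k t) - ∑ k ∈ A', a k • x k τ‖ :=
                    mul_le_mul_of_nonneg_right h3 (norm_nonneg _)
                _ ≤ μ⁻¹ * ((V * V * M) * (t - τ)) := by
                    refine mul_le_mul_of_nonneg_left ?_ (inv_nonneg.mpr (le_of_lt hμ0))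
                    rw [hVdef]
                    exact hdr
                _ = K' * (t - τ) := by rw [hK'def]; ring
            obtain ⟨hiAt, hiAτ, hdriftA⟩ := hcenter A hA i hiA
            obtain ⟨hjBt, hjBτ, hdriftB⟩ := hcenter B hB j hjB
            refine ⟨i, hi, j, hj, ?_⟩
            have c1 := norm_tri (x i t) ((∑ k ∈ A, a k)⁻¹ • ∑ k ∈ A, a k • x k t) (x j t)
            have c2 := norm_tri ((∑ k ∈ A, a k)⁻¹ • ∑ k ∈ A, a k • x k t)
              ((∑ k ∈ A, a k)⁻¹ • ∑ k ∈ A, a k • x k τ) (x j t)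
            have c3 := norm_tri ((∑ k ∈ A, a k)⁻¹ • ∑ k ∈ A, a k • x k τ) (x i τ) (x j t)
            have c4 := norm_tri (x i τ) (x j τ) (x j t)
            have c5 := norm_tri (x j τ) ((∑ k ∈ B, a k)⁻¹ • ∑ k ∈ B, a k • x k τ) (x j t)
            have c6 := norm_tri ((∑ k ∈ B, a k)⁻¹ • ∑ k ∈ B, a k • x k τ)
              ((∑ k ∈ B, a k)⁻¹ • ∑ k ∈ B, a k • x k t) (x j t)
            have e1 : ‖((∑ k ∈ A, a k)⁻¹ • ∑ k ∈ A, a k • x k τ) - x i τ‖ ≤ Λ * Δ := by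
              rw [norm_sub_rev]; exact hiAτ
            have e2 : ‖((∑ k ∈ B, a k)⁻¹ • ∑ k ∈ B, a k • x k τ)
                - (∑ k ∈ B, a k)⁻¹ • ∑ k ∈ B, a k • x k t‖ ≤ K' * (t - τ) := by
              rw [norm_sub_rev]; exact hdriftB
            have e3 : ‖((∑ k ∈ B, a k)⁻¹ • ∑ k ∈ B, a k • x k t) - x j t‖ ≤ Λ * Δ := by
              rw [norm_sub_rev]; exact hjBt
            have hsum : ‖x i t - x j t‖ ≤
                ‖x i t - (∑ k ∈ A, a k)⁻¹ • ∑ k ∈ A, a k • x k t‖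
                + ‖(∑ k ∈ A, a k)⁻¹ • ∑ k ∈ A, a k • x k t
                    - (∑ k ∈ A, a k)⁻¹ • ∑ k ∈ A, a k • x k τ‖
                + ‖((∑ k ∈ A, a k)⁻¹ • ∑ k ∈ A, a k • x k τ) - x i τ‖
                + ‖x i τ - x j τ‖
                + ‖x j τ - (∑ k ∈ B, a k)⁻¹ • ∑ k ∈ B, a k • x k τ‖
                + ‖((∑ k ∈ B, a k)⁻¹ • ∑ k ∈ B, a k • x k τ)
                    - (∑ k ∈ B, a k)⁻¹ • ∑ k ∈ B, a k • x k t‖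
                + ‖((∑ k ∈ B, a k)⁻¹ • ∑ k ∈ B, a k • x k t) - x j t‖ := by
              linarith [c1, c2, c3, c4, c5, c6]
            refine le_trans (le_trans hsum (add_le_add (add_le_add (add_le_add (add_le_add
              (add_le_add (add_le_add hiAt hdriftA) e1)
              (le_refl ‖x i τ - x j τ‖)) hjBτ) e2) e3)) (le_of_eq (by ring))
        -- hitting time analysis
        set Qset : Finset ((Finset (Fin N) × Finset (Fin N)) × (Fin N × Fin N)) :=
          ((Pt ×ˢ Pt) ×ˢ (Finset.univ ×ˢ Finset.univ)).filter
            (fun q => q.1.1 ≠ q.1.2 ∧ q.2.1 ∈ q.1.1 ∧ q.2.2 ∈ q.1.2) with hQset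
        have hQmem : ∀ q, q ∈ Qset ↔ (q.1.1 ∈ Pt ∧ q.1.2 ∈ Pt ∧ q.1.1 ≠ q.1.2
            ∧ q.2.1 ∈ q.1.1 ∧ q.2.2 ∈ q.1.2) := by
          intro q
          rw [hQset, Finset.mem_filter, Finset.mem_product, Finset.mem_product]
          constructor
      
          · rintro ⟨⟨⟨h1, h2⟩, -⟩, h3, h4, h5⟩; exact ⟨h1, h2, h3, h4, h5⟩
          · rintro ⟨h1, h2, h3, h4, h5⟩
            exact ⟨⟨⟨h1, h2⟩, Finset.mem_product.mpr ⟨Finset.mem_univ _, Finset.mem_univ _⟩⟩, h3, h4, h5⟩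
        set S : Set ℝ := {u | u ∈ Set.Icc τ t' ∧ ∃ q ∈ Qset, ‖x q.2.1 u - x q.2.2 u‖ ∈ Set.Iic 1}
          with hSdef
        have hSclosed : IsClosed S := isClosed_exists_pairs Qset isClosed_Icc _
          (fun p _ => dist_continuousOn hsol (hIccT12 t' (le_refl t')) _ _) _ (fun _ => isClosed_Iic)
        by_cases hSne : S.Nonempty
        · -- there is a collision time: split at τ' = sInf S
          set τ' : ℝ := sInf S with hτ'def
          have hbdd : BddBelow S := ⟨τ, fun u hu => hu.1.1⟩
          have hτ'S : τ' ∈ S := hSclosed.csInf_mem hSne hbdd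
          have hττ' : τ ≤ τ' := hτ'S.1.1
          have hτ't' : τ' ≤ t' := hτ'S.1.2
          have hτnotS : τ ∉ S := by
            rintro ⟨-, q, hq, hle⟩
            obtain ⟨hq1, hq2, hq3, hq4, hq5⟩ := (hQmem q).mp hq
            have := hsepτ q.1.1 hq1 q.1.2 hq2 hq3 q.2.1 hq4 q.2.2 hq5
            rw [Set.mem_Iic] at hle
            linarith
          have hττ'lt : τ < τ' := lt_of_le_of_ne hττ' (fun h => hτnotS (h ▸ hτ'S))
          -- cross-part separation ≥ 1 holds on [τ, τ']
          have hZ : ∀ u ∈ Set.Icc τ τ', ∀ A ∈ Pt, ∀ B ∈ Pt, A ≠ B → ∀ p ∈ A, ∀ q ∈ B,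
              1 ≤ ‖x p u - x q u‖ := by
            set Z : Set ℝ := {u | u ∈ Set.Icc τ t' ∧ ∀ q ∈ Qset, ‖x q.2.1 u - x q.2.2 u‖ ∈ Set.Ici 1}
              with hZdef
            have hZclosed : IsClosed Z := isClosed_forall_pairs Qset isClosed_Icc _
              (fun p _ => dist_continuousOn hsol (hIccT12 t' (le_refl t')) _ _) _ (fun _ => isClosed_Ici)
            have hIcoZ : Set.Ico τ τ' ⊆ Z := by
              intro u hu
              have huI : u ∈ Set.Icc τ t' := ⟨hu.1, le_trans (le_of_lt hu.2) hτ't'⟩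
              refine ⟨huI, ?_⟩
              intro q hq
              rw [Set.mem_Ici]
              by_contra hcon
              push_neg at hcon
              have huS : u ∈ S := ⟨huI, q, hq, Set.mem_Iic.mpr (le_of_lt hcon)⟩
              exact absurd (csInf_le hbdd huS) (not_le.mpr hu.2)
            have hIccZ : Set.Icc τ τ' ⊆ Z := by
              rw [← closure_Ico (ne_of_lt hττ'lt)]
              exact closure_minimal hIcoZ hZclosed
            intro u hu A hA B hB hAB p hp q hq
            exact (hIccZ hu).2 ((A,B),(p,q)) ((hQmem _).mpr ⟨hA, hB, hAB, hp, hq⟩)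
          -- the collision pair
          obtain ⟨-, q₀, hq₀, hq₀le⟩ := hτ'S
          obtain ⟨hA₀, hB₀, hAB₀, hk₀, hl₀⟩ := (hQmem q₀).mp hq₀
          rw [Set.mem_Iic] at hq₀le
          -- new partition at time τ' at scale g (N - c)
          have hσ'pos : (0:ℝ) < g (N - c) := lt_of_lt_of_le (by norm_num) (hg2 _)
          obtain ⟨Pt', hPt'card, hPt'ne, hPt'sub, hPt'cover, hPt'diam0, hPt'sep0⟩ :=
            exists_partition (fun p => x p τ') (g (N - c)) hσ'pos P.card P (le_refl _)
          have hPt'diam : ∀ A ∈ Pt', ∀ p ∈ A, ∀ q ∈ A, ‖x p τ' - x q τ'‖ ≤ 2*N*(g (N-c)) :=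
            hPt'diam0
          have hPt'sep : ∀ A ∈ Pt', ∀ B ∈ Pt', A ≠ B → ∀ p ∈ A, ∀ q ∈ B,
              g (N-c) < ‖x p τ' - x q τ'‖ := hPt'sep0
          have hdiamτ' : ∀ A ∈ Pt, ∀ p ∈ A, ∀ q ∈ A, ‖x p τ' - x q τ'‖ ≤ Δ :=
            fun A hA p hp q hq => hpartdiam τ' hττ' hτ't' hZ A hA τ'
              ⟨hττ', le_refl τ'⟩ p hp q hq
          -- the map sending old parts into the new parts containing them
          set Φ : Finset (Fin N) → Finset (Fin N) := fun A =>
            if h : ∃ B' ∈ Pt', ∃ q ∈ A, q ∈ B' then h.choose else ∅ with hΦdef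
          have hΦspec : ∀ A ∈ Pt, Φ A ∈ Pt' ∧ A ⊆ Φ A := by
            intro A hA
            obtain ⟨p₀, hp₀⟩ := hPtne A hA
            obtain ⟨B', hB', hpB'⟩ := hPt'cover p₀ (hPtsub A hA hp₀)
            have hex : ∃ B' ∈ Pt', ∃ q ∈ A, q ∈ B' := ⟨B', hB', p₀, hp₀, hpB'⟩
            have hΦA : Φ A = hex.choose := by rw [hΦdef]; exact dif_pos hex
            obtain ⟨hch1, qc, hqc1, hqc2⟩ := hex.choose_spec
            rw [hΦA]
            refine ⟨hch1, ?_⟩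
            intro j hj
            obtain ⟨B'', hB'', hjB''⟩ := hPt'cover j (hPtsub A hA hj)
            by_cases hBB : B'' = hex.choose
            · exact hBB ▸ hjB''
            · exfalso
              have h1 := hPt'sep B'' hB'' hex.choose hch1 hBB j hjB'' qc hqc2
              have h2 := hdiamτ' A hA j hj qc hqc1
              rw [hσ'] at h1
              linarith
          have hcard' : Pt'.card ≤ c := by
            have hsub' : Pt' ⊆ Pt.image Φ := by
              intro B' hB'
              obtain ⟨p₀, hp₀⟩ := hPt'ne B' hB'
              obtain ⟨A, hA, hpA⟩ := hcover p₀ (hPt'sub B' hB' hp₀)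
              obtain ⟨h1, h2⟩ := hΦspec A hA
              have h3 : p₀ ∈ Φ A := h2 hpA
              have : Φ A = B' := by
                by_contra hne
                have := hPt'sep (Φ A) h1 B' hB' hne p₀ h3 p₀ hp₀
                simp only [sub_self, norm_zero] at this
                linarith
              rw [← this]
              exact Finset.mem_image_of_mem Φ hA
            have himg : (Pt.image Φ).card < Pt.card := by
              rcases lt_or_eq_of_le (Finset.card_image_le (s := Pt) (f := Φ)) with h | h
              · exact h
              · exfalso
                have hinj := Finset.card_image_iff.mp h
                have hΦA₀ := hΦspec q₀.1.1 hA₀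
                have hΦB₀ := hΦspec q₀.1.2 hB₀
                have heq : Φ q₀.1.1 = Φ q₀.1.2 := by
                  by_contra hne
                  have := hPt'sep _ hΦA₀.1 _ hΦB₀.1 hne q₀.2.1 (hΦA₀.2 hk₀) q₀.2.2 (hΦB₀.2 hl₀)
                  have h2σ' : 2 ≤ g (N - c) := hg2 _
                  linarith
                exact hAB₀ (hinj hA₀ hB₀ heq)
            have := Finset.card_le_card hsub'
            omega
          -- recurse on [τ', t']
          have hihc := ihc (le_trans (Nat.le_succ c) hcN) τ' t' (le_trans ht1τ hττ') hτ't' ht't2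
            (fun u hu => hlow u ⟨le_trans hττ' hu.1, hu.2⟩) Pt' hcard' hPt'ne hPt'sub hPt'cover
            hPt'diam hPt'sep
          -- conclusion
          intro t ht i hi j hj
          have h4g : 4*Λ*Δ ≤ 4*Λ*(g N) :=
            mul_le_mul_of_nonneg_left hΔgN (mul_nonneg (by norm_num) hΛ0)
          have hcast : ((c+1 : ℕ) : ℝ) = (c : ℝ) + 1 := by push_cast; ring
          have hc0 : (0:ℝ) ≤ (c:ℝ) := Nat.cast_nonneg c
          have h4gN0 : 0 ≤ 4*Λ*(g N) := mul_nonneg (mul_nonneg (by norm_num) hΛ0) hgN0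
          have h5 : 0 ≤ (4*Λ*(g N))*(c:ℝ) := mul_nonneg h4gN0 hc0
          by_cases htτ' : t ≤ τ'
          · obtain ⟨k, hk, l, hl, hb⟩ := stage τ' hττ' hτ't' hZ t ⟨ht.1, htτ'⟩ i hi j hj
            refine ⟨k, hk, l, hl, ?_⟩
            rw [hcast]
            linarith
          · push_neg at htτ'
            obtain ⟨k, hk, l, hl, hb1⟩ := hihc t ⟨le_of_lt htτ', ht.2⟩ i hi j hj
            obtain ⟨k2, hk2, l2, hl2, hb2⟩ := stage τ' hττ' hτ't' hZ τ'
              ⟨hττ', le_refl τ'⟩ k hk l hl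
            refine ⟨k2, hk2, l2, hl2, ?_⟩
            rw [hcast]
            linarith
        · -- no collision on [τ, t']: a single stage suffices
          have hsep1 : ∀ u ∈ Set.Icc τ t', ∀ A ∈ Pt, ∀ B ∈ Pt, A ≠ B → ∀ p ∈ A, ∀ q ∈ B,
              1 ≤ ‖x p u - x q u‖ := by
            intro u hu A hA B hB hAB p hp q hq
            by_contra hcon
            push_neg at hcon
            exact hSne ⟨u, hu, ((A,B),(p,q)), (hQmem _).mpr ⟨hA, hB, hAB, hp, hq⟩,
              Set.mem_Iic.mpr (le_of_lt hcon)⟩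
          intro t ht i hi j hj
          obtain ⟨k, hk, l, hl, hb⟩ := stage t' hτt' (le_refl t') hsep1 t ht i hi j hj
          refine ⟨k, hk, l, hl, ?_⟩
          have h4g : 4*Λ*Δ ≤ 4*Λ*(g N) :=
            mul_le_mul_of_nonneg_left hΔgN (mul_nonneg (by norm_num) hΛ0)
          have hcast : ((c+1 : ℕ) : ℝ) = (c : ℝ) + 1 := by push_cast; ring
          have hc0 : (0:ℝ) ≤ (c:ℝ) := Nat.cast_nonneg c
          have h4gN0 : 0 ≤ 4*Λ*(g N) := mul_nonneg (mul_nonneg (by norm_num) hΛ0) hgN0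
          have h5 : 0 ≤ (4*Λ*(g N))*(c:ℝ) := mul_nonneg h4gN0 hc0
          rw [hcast]
          linarith
    -- ================= top level: the crossing argument =================
    intro t ht i hi j hj
    have h0t1 : 0 ≤ t1 := (hsub12 ⟨le_refl t1, ht12⟩).1
    have htT : t < T := (hsub12 ht).2
    have htsub : Set.Icc t1 t ⊆ Set.Ico 0 T := fun u hu => hsub12 ⟨hu.1, le_trans hu.2 ht.2⟩
    have hJT : ∀ u, t1 ≤ u → 2*K'*(t - u) ≤ 2*K'*T := by
      intro u hu
      have h1 : t - u ≤ T := by linarith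
      exact mul_le_mul_of_nonneg_left h1 (mul_nonneg (by norm_num) hK'0)
    by_cases hWne : {u | u ∈ Set.Icc t1 t ∧ ∀ p ∈ P ×ˢ P, ‖x p.1 u - x p.2 u‖ ∈ Set.Iic R}.Nonempty
    · set W : Set ℝ := {u | u ∈ Set.Icc t1 t ∧ ∀ p ∈ P ×ˢ P, ‖x p.1 u - x p.2 u‖ ∈ Set.Iic R}
        with hWdef
      have hWclosed : IsClosed W := isClosed_forall_pairs (P ×ˢ P) isClosed_Icc _
        (fun p _ => dist_continuousOn hsol htsub _ _) _ (fun _ => isClosed_Iic)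
      have hbddW : BddAbove W := ⟨t, fun u hu => hu.1.2⟩
      set t0 : ℝ := sSup W with ht0def
      have ht0W : t0 ∈ W := hWclosed.csSup_mem hWne hbddW
      by_cases ht0t : t0 = t
      · have hb : ‖x i t - x j t‖ ≤ R := by
          have h1 := ht0W.2 (i,j) (Finset.mem_product.mpr ⟨hi, hj⟩)
          rw [Set.mem_Iic] at h1
          rwa [ht0t] at h1
        refine ⟨i, hi, i, hi, ?_⟩
        simp only [sub_self, norm_zero, zero_add]
        have h2 : 0 ≤ (4*Λ*(g N))*(N:ℝ) :=
          mul_nonneg (mul_nonneg (mul_nonneg (by norm_num) hΛ0) hgN0) hNR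
        have h3 : 0 ≤ 2*K'*T := mul_nonneg (mul_nonneg (by norm_num) hK'0) hT.le
        linarith
      · have ht0lt : t0 < t := lt_of_le_of_ne ht0W.1.2 ht0t
        have hlow : ∀ u ∈ Set.Icc t0 t, ∃ k ∈ P, ∃ l ∈ P, R ≤ ‖x k u - x l u‖ := by
          set Zl : Set ℝ := {u | u ∈ Set.Icc t1 t ∧ ∃ p ∈ P ×ˢ P, ‖x p.1 u - x p.2 u‖ ∈ Set.Ici R}
            with hZl
          have hZlclosed : IsClosed Zl := isClosed_exists_pairs (P ×ˢ P) isClosed_Icc _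
            (fun p _ => dist_continuousOn hsol htsub _ _) _ (fun _ => isClosed_Ici)
          have hIoc : Set.Ioc t0 t ⊆ Zl := by
            intro u hu
            have huIcc : u ∈ Set.Icc t1 t := ⟨le_trans ht0W.1.1 (le_of_lt hu.1), hu.2⟩
            have hnW : u ∉ W := fun huW => absurd (le_csSup hbddW huW) (not_le.mpr hu.1)
            refine ⟨huIcc, ?_⟩
            by_contra hcon
            push_neg at hcon
            refine hnW ⟨huIcc, ?_⟩
            intro p hp
            have := hcon p hp
            rw [Set.mem_Ici] at this
            push_neg at this
            exact Set.mem_Iic.mpr (le_of_lt this)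
          have hIccZ : Set.Icc t0 t ⊆ Zl := by
            rw [← closure_Ioc (ne_of_lt ht0lt)]
            exact closure_minimal hIoc hZlclosed
          intro u hu
          obtain ⟨-, p, hp, hR'⟩ := hIccZ hu
          rw [Finset.mem_product] at hp
          exact ⟨p.1, hp.1, p.2, hp.2, hR'⟩
        obtain ⟨Pt0, hc0, hne0, hsub0, hcov0, hdiam0, hsep0⟩ :=
          exists_partition (fun p => x p t0) 2 (by norm_num) P.card P (le_refl _)
        have ht1t0 : t1 ≤ t0 := ht0W.1.1
        obtain ⟨k, hk, l, hl, hb⟩ := inner N (le_refl N) t0 t ht1t0 (le_of_lt ht0lt)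
          ht.2 hlow Pt0
          (le_trans hc0 hcardPN) hne0 hsub0 hcov0
          (by rw [hgNN]; exact hdiam0) (by rw [hgNN]; exact hsep0)
          t ⟨le_of_lt ht0lt, le_refl t⟩ i hi j hj
        have hklR : ‖x k t0 - x l t0‖ ≤ R := by
          have h1 := ht0W.2 (k,l) (Finset.mem_product.mpr ⟨hk, hl⟩)
          rwa [Set.mem_Iic] at h1
        refine ⟨i, hi, i, hi, ?_⟩
        simp only [sub_self, norm_zero, zero_add]
        have h2 : 2*K'*(t - t0) ≤ 2*K'*T := hJT t0 ht1t0
        have h3 : (4*Λ*(g N))*(N:ℝ) ≤ (4*Λ*(g N))*N := le_refl _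
        linarith
    · have hlow : ∀ u ∈ Set.Icc t1 t, ∃ k ∈ P, ∃ l ∈ P, R ≤ ‖x k u - x l u‖ := by
        intro u hu
        by_contra hcon
        push_neg at hcon
        refine hWne ⟨u, hu, ?_⟩
        rintro ⟨p1, p2⟩ hp
        rw [Finset.mem_product] at hp
        exact Set.mem_Iic.mpr (le_of_lt (hcon p1 hp.1 p2 hp.2))
      obtain ⟨Pt0, hc0, hne0, hsub0, hcov0, hdiam0, hsep0⟩ :=
        exists_partition (fun p => x p t1) 2 (by norm_num) P.card P (le_refl _)
      obtain ⟨k, hk, l, hl, hb⟩ := inner N (le_refl N) t1 t (le_refl t1) ht.1 ht.2 hlow Pt0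
        (le_trans hc0 hcardPN) hne0 hsub0 hcov0
        (by rw [hgNN]; exact hdiam0) (by rw [hgNN]; exact hsep0)
        t ⟨ht.1, le_refl t⟩ i hi j hj
      refine ⟨k, hk, l, hl, ?_⟩
      have h2 : 2*K'*(t - t1) ≤ 2*K'*T := hJT t1 (le_refl t1)
      linarith

/-- Uniform relative bound on the trajectories: under the non-neutral *proper* cluster
hypothesis (the total sum of intensities may vanish), the diameter
`max_{i,j} |x_i(t) − x_j(t)|` of the vortex system exceeds its initial value by at most a
constant `C` depending only on `N`, the intensities, `T` and the bound `M` on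
`sup_{r≥1} |G'(r)|`. -/
theorem uniform_relative_bound_on_trajectories
    (N : ℕ) (hN : 1 ≤ N) (a : Fin N → ℝ) (ha : ∀ i, a i ≠ 0)
    (hcluster : ∀ P : Finset (Fin N), P.Nonempty → P ≠ Finset.univ → ∑ i ∈ P, a i ≠ 0)
    (T : ℝ) (hT : 0 < T) (M : ℝ) (hM : 0 ≤ M) :
    ∃ C > (0 : ℝ), ∀ G : ℝ → ℝ, KernelRegular G →
      (∀ r : ℝ, 1 ≤ r → |deriv G r| ≤ M) →
      ∀ x : Fin N → ℝ → Plane, IsVortexSolution N a G T x →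
        ∀ t ∈ Set.Ico (0 : ℝ) T, ∀ i j : Fin N,
          ‖x i t - x j t‖ ≤ (⨆ k : Fin N, ⨆ l : Fin N, ‖x k 0 - x l 0‖) + C := by
  obtain ⟨C, hC0, hC⟩ := main_lemma hN a hcluster T M hT hM N
  refine ⟨C + 1, by linarith, ?_⟩
  intro G _hreg hMb x hsol t ht i j
  have h0t : (0:ℝ) ≤ t := ht.1
  have hsub : Set.Icc 0 t ⊆ Set.Ico 0 T := fun u hu => ⟨hu.1, lt_of_le_of_lt hu.2 ht.2⟩
  obtain ⟨k, -, l, -, hkl⟩ :=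
    hC G x hsol hMb Finset.univ (by simp) 0 t h0t hsub
      (fun u _ i' _ j' hj' => absurd (Finset.mem_univ j') hj')
      t (Set.mem_Icc.mpr ⟨h0t, le_refl t⟩) i (Finset.mem_univ i) j (Finset.mem_univ j)
  have h1 : ‖x k 0 - x l 0‖ ≤ ⨆ l' : Fin N, ‖x k 0 - x l' 0‖ :=
    le_ciSup (f := fun l' : Fin N => ‖x k 0 - x l' 0‖)
      (Set.Finite.bddAbove (Set.finite_range _)) l
  have h2 : (⨆ l' : Fin N, ‖x k 0 - x l' 0‖) ≤ ⨆ k' : Fin N, ⨆ l' : Fin N, ‖x k' 0 - x l' 0‖ :=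
    le_ciSup (f := fun k' : Fin N => ⨆ l' : Fin N, ‖x k' 0 - x l' 0‖)
      (Set.Finite.bddAbove (Set.finite_range _)) k
  linarith
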